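/- The linear map s: ℂ² → ℂ² given by s(a,b) = ((a+3b)/2, (a−b)/2) is an involution (s² = id), and together with t(a,b) = (a,−b) it generates a dihedral group of order 12; moreover both s and t preserve the quadratic form a² + 3b². -/

import Mathlib

noncomputable section

/-- The linear map `s : (a,b) ↦ ((a+3b)/2, (a−b)/2)` on `ℂ²`. -/
def sMap : (ℂ × ℂ) →ₗ[ℂ] (ℂ × ℂ) where
  toFun p := ((p.1 + 3 * p.2) / 2, (p.1 - p.2) / 2)
  map_add' p q := by
    simp only [Prod.fst_add, Prod.snd_add, Prod.mk_add_mk, Prod.mk.injEq]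
    constructor <;> ring
  map_smul' c p := by
    simp only [Prod.smul_fst, Prod.smul_snd, smul_eq_mul, Prod.smul_mk, RingHom.id_apply,
      Prod.mk.injEq]
    constructor <;> ring

lemma sMap_involutive : Function.Involutive sMap := by
  intro p
  simp only [sMap, LinearMap.coe_mk, AddHom.coe_mk]
  rw [Prod.ext_iff]
  constructor <;> · simp; ring

/-- The linear map `t : (a,b) ↦ (a, −b)` on `ℂ²`. -/
def tMap : (ℂ × ℂ) →ₗ[ℂ] (ℂ × ℂ) where
  toFun p := (p.1, -p.2)
  map_add' p q := by
    simp only [Prod.fst_add, Prod.snd_add, Prod.mk_add_mk, Prod.mk.injEq]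
    (try constructor) <;> (try simp) <;> ring
  map_smul' c p := by
    simp only [Prod.smul_fst, Prod.smul_snd, smul_eq_mul, Prod.smul_mk, RingHom.id_apply,
      Prod.mk.injEq]
    (try constructor) <;> (try simp) <;> ring

lemma tMap_involutive : Function.Involutive tMap := by
  intro p
  simp [tMap]

/-- `s` as a linear automorphism of `ℂ²`. -/
def sEquiv : (ℂ × ℂ) ≃ₗ[ℂ] (ℂ × ℂ) := LinearEquiv.ofInvolutive sMap sMap_involutive

/-- `t` as a linear automorphism of `ℂ²`. -/
def tEquiv : (ℂ × ℂ) ≃ₗ[ℂ] (ℂ × ℂ) := LinearEquiv.ofInvolutive tMap tMap_involutive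

namespace Stmt7Aux

abbrev G := (ℂ × ℂ) ≃ₗ[ℂ] (ℂ × ℂ)

def u : G := sEquiv * tEquiv

lemma mul_apply (e f : G) (p : ℂ × ℂ) : (e * f) p = e (f p) := rfl

lemma one_apply (p : ℂ × ℂ) : (1 : G) p = p := rfl

lemma sEquiv_apply (p : ℂ × ℂ) : sEquiv p = ((p.1 + 3 * p.2) / 2, (p.1 - p.2) / 2) := rfl
lemma tEquiv_apply (p : ℂ × ℂ) : tEquiv p = (p.1, -p.2) := rfl

lemma u_apply (p : ℂ × ℂ) : u p = ((p.1 - 3 * p.2) / 2, (p.1 + p.2) / 2) := by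
  show sEquiv (tEquiv p) = _
  rw [tEquiv_apply, sEquiv_apply]
  simp only [Prod.mk.injEq]
  constructor <;> ring

lemma s_invol : Function.Involutive sEquiv := fun p => sMap_involutive p
lemma t_invol : Function.Involutive tEquiv := fun p => tMap_involutive p

lemma s_sq : sEquiv * sEquiv = 1 :=
  LinearEquiv.toLinearMap_injective (LinearMap.ext fun p => s_invol p)

lemma t_sq : tEquiv * tEquiv = 1 :=
  LinearEquiv.toLinearMap_injective (LinearMap.ext fun p => t_invol p)

lemma s_inv : sEquiv⁻¹ = sEquiv := by
  rw [inv_eq_iff_mul_eq_one, s_sq]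

lemma t_inv : tEquiv⁻¹ = tEquiv := by
  rw [inv_eq_iff_mul_eq_one, t_sq]

lemma u_inv : u⁻¹ = tEquiv * sEquiv := by
  rw [u, mul_inv_rev, s_inv, t_inv]

lemma t_u_t : tEquiv * u * tEquiv⁻¹ = u⁻¹ := by
  rw [u_inv, t_inv, u, ← mul_assoc, mul_assoc (tEquiv * sEquiv), t_sq, mul_one]

lemma t_zpow (n : ℤ) : tEquiv * u ^ n = u ^ (-n) * tEquiv := by
  have h : (MulAut.conj tEquiv) (u ^ n) = u ^ (-n) := by
    rw [map_zpow]
    show (tEquiv * u * tEquiv⁻¹) ^ n = _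
    rw [t_u_t, ← zpow_neg_one, ← zpow_mul]
    ring_nf
  have h2 : tEquiv * u ^ n * tEquiv⁻¹ = u ^ (-n) := h
  rw [← h2, mul_assoc, mul_assoc, t_inv, t_sq, mul_one]

lemma u3 (p : ℂ × ℂ) : u (u (u p)) = -p := by
  simp only [u_apply, Prod.ext_iff, Prod.fst_neg, Prod.snd_neg]
  constructor <;> · field_simp; ring

lemma pow_succ_apply (n : ℕ) (p : ℂ × ℂ) : (u ^ (n + 1)) p = u ((u ^ n) p) := by
  rw [pow_succ', mul_apply]

lemma u_pow_six : u ^ 6 = 1 := by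
  apply LinearEquiv.toLinearMap_injective
  apply LinearMap.ext
  intro p
  show (u ^ 6) p = (1 : G) p
  rw [one_apply, pow_succ_apply, pow_succ_apply, pow_succ_apply, pow_succ_apply,
    pow_succ_apply, pow_succ_apply, pow_zero, one_apply, u3 p, u3 (-p), neg_neg]

lemma up1 : (u ^ 1) ((1 : ℂ), (0 : ℂ)) = (1/2, 1/2) := by
  rw [pow_one, u_apply]; norm_num
lemma up2 : (u ^ 2) ((1 : ℂ), (0 : ℂ)) = (-(1/2), 1/2) := by
  rw [show (2:ℕ) = 1 + 1 from rfl, pow_succ_apply, up1, u_apply]; norm_num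
lemma up3 : (u ^ 3) ((1 : ℂ), (0 : ℂ)) = (-1, 0) := by
  rw [show (3:ℕ) = 2 + 1 from rfl, pow_succ_apply, up2, u_apply]; norm_num
lemma up4 : (u ^ 4) ((1 : ℂ), (0 : ℂ)) = (-(1/2), -(1/2)) := by
  rw [show (4:ℕ) = 3 + 1 from rfl, pow_succ_apply, up3, u_apply]; norm_num
lemma up5 : (u ^ 5) ((1 : ℂ), (0 : ℂ)) = (1/2, -(1/2)) := by
  rw [show (5:ℕ) = 4 + 1 from rfl, pow_succ_apply, up4, u_apply]; norm_num

lemma u_order : orderOf u = 6 := by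
  rw [orderOf_eq_iff (by norm_num)]
  refine ⟨u_pow_six, ?_⟩
  intro m hm hm0 h
  interval_cases m
  · have h1 : (u ^ 1) ((1:ℂ), (0:ℂ)) = (1, 0) := by rw [h, one_apply]
    rw [up1] at h1
    have := congrArg Prod.fst h1; norm_num at this
  · have h1 : (u ^ 2) ((1:ℂ), (0:ℂ)) = (1, 0) := by rw [h, one_apply]
    rw [up2] at h1
    have := congrArg Prod.fst h1; norm_num at this
  · have h1 : (u ^ 3) ((1:ℂ), (0:ℂ)) = (1, 0) := by rw [h, one_apply]
    rw [up3] at h1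
    have := congrArg Prod.fst h1; norm_num at this
  · have h1 : (u ^ 4) ((1:ℂ), (0:ℂ)) = (1, 0) := by rw [h, one_apply]
    rw [up4] at h1
    have := congrArg Prod.fst h1; norm_num at this
  · have h1 : (u ^ 5) ((1:ℂ), (0:ℂ)) = (1, 0) := by rw [h, one_apply]
    rw [up5] at h1
    have := congrArg Prod.fst h1; norm_num at this

lemma t_ne_pow (m : ℕ) : u ^ m ≠ tEquiv := by
  intro h
  rw [← pow_mod_orderOf, u_order] at h
  have hlt : m % 6 < 6 := Nat.mod_lt _ (by norm_num)
  set k := m % 6 with hk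
  clear_value k
  interval_cases k
  · have h1 : (u ^ 0) ((0:ℂ), (1:ℂ)) = tEquiv ((0:ℂ), (1:ℂ)) := by rw [h]
    rw [pow_zero, one_apply, tEquiv_apply] at h1
    have := congrArg Prod.snd h1; norm_num at this
  · have h1 : (u ^ 1) ((1:ℂ), (0:ℂ)) = tEquiv ((1:ℂ), (0:ℂ)) := by rw [h]
    rw [up1, tEquiv_apply] at h1
    have := congrArg Prod.fst h1; norm_num at this
  · have h1 : (u ^ 2) ((1:ℂ), (0:ℂ)) = tEquiv ((1:ℂ), (0:ℂ)) := by rw [h]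
    rw [up2, tEquiv_apply] at h1
    have := congrArg Prod.fst h1; norm_num at this
  · have h1 : (u ^ 3) ((1:ℂ), (0:ℂ)) = tEquiv ((1:ℂ), (0:ℂ)) := by rw [h]
    rw [up3, tEquiv_apply] at h1
    have := congrArg Prod.fst h1; norm_num at this
  · have h1 : (u ^ 4) ((1:ℂ), (0:ℂ)) = tEquiv ((1:ℂ), (0:ℂ)) := by rw [h]
    rw [up4, tEquiv_apply] at h1
    have := congrArg Prod.fst h1; norm_num at this
  · have h1 : (u ^ 5) ((1:ℂ), (0:ℂ)) = tEquiv ((1:ℂ), (0:ℂ)) := by rw [h]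
    rw [up5, tEquiv_apply] at h1
    have := congrArg Prod.fst h1; norm_num at this

lemma t_ne_zpow (n : ℤ) : u ^ n ≠ tEquiv := by
  intro h
  rw [← zpow_mod_orderOf, u_order] at h
  simp only [Nat.cast_ofNat] at h
  have h0 : 0 ≤ n % 6 := Int.emod_nonneg n (by norm_num)
  rw [← Int.toNat_of_nonneg h0, zpow_natCast] at h
  exact t_ne_pow _ h

def K : Subgroup G where
  carrier := {x | ∃ n : ℤ, x = u ^ n ∨ x = u ^ n * tEquiv}
  one_mem' := ⟨0, Or.inl (by rw [zpow_zero])⟩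
  mul_mem' := by
    rintro x y ⟨n, hn | hn⟩ ⟨m, hm | hm⟩ <;> subst hn hm
    · exact ⟨n + m, Or.inl (zpow_add u n m).symm⟩
    · exact ⟨n + m, Or.inr (by rw [← mul_assoc, ← zpow_add])⟩
    · refine ⟨n - m, Or.inr ?_⟩
      rw [mul_assoc, t_zpow, ← mul_assoc, ← zpow_add]
      ring_nf
    · refine ⟨n - m, Or.inl ?_⟩
      rw [mul_assoc, ← mul_assoc tEquiv, t_zpow, mul_assoc, t_sq, mul_one, ← zpow_add]
      ring_nf
  inv_mem' := by
    rintro x ⟨n, hn | hn⟩ <;> subst hn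
    · exact ⟨-n, Or.inl (by rw [zpow_neg])⟩
    · refine ⟨n, Or.inr ?_⟩
      rw [mul_inv_rev, t_inv, ← zpow_neg, t_zpow, neg_neg]

lemma closure_eq : Subgroup.closure ({sEquiv, tEquiv} : Set G) = K := by
  apply le_antisymm
  · rw [Subgroup.closure_le]
    rintro x (rfl | rfl)
    · exact ⟨1, Or.inr (by rw [zpow_one, u, mul_assoc, t_sq, mul_one])⟩
    · exact ⟨0, Or.inr (by rw [zpow_zero, one_mul])⟩
  · have hs : sEquiv ∈ Subgroup.closure ({sEquiv, tEquiv} : Set G) :=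
      Subgroup.subset_closure (Set.mem_insert _ _)
    have ht : tEquiv ∈ Subgroup.closure ({sEquiv, tEquiv} : Set G) :=
      Subgroup.subset_closure (Set.mem_insert_of_mem _ rfl)
    have hu : u ∈ Subgroup.closure ({sEquiv, tEquiv} : Set G) := mul_mem hs ht
    rintro x ⟨n, hn | hn⟩ <;> subst hn
    · exact zpow_mem hu n
    · exact mul_mem (zpow_mem hu n) ht

def f : ZMod 6 × ZMod 2 → K := fun p =>
  ⟨u ^ (p.1.val : ℤ) * tEquiv ^ p.2.val, by
    have h2 : p.2.val < 2 := ZMod.val_lt p.2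
    interval_cases h : p.2.val
    · exact ⟨(p.1.val : ℤ), Or.inl (by rw [pow_zero, mul_one])⟩
    · exact ⟨(p.1.val : ℤ), Or.inr (by rw [pow_one])⟩⟩

lemma zmod2_cases (j : ZMod 2) : j = 0 ∨ j = 1 := by revert j; decide

lemma f_bij : Function.Bijective f := by
  constructor
  · rintro ⟨i, j⟩ ⟨k, l⟩ h
    have h' : u ^ (i.val : ℤ) * tEquiv ^ j.val = u ^ (k.val : ℤ) * tEquiv ^ l.val :=
      congrArg Subtype.val h
    have key : ∀ a b : ZMod 6, u ^ (a.val : ℤ) = u ^ (b.val : ℤ) → a = b := by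
      intro a b hab
      rw [zpow_eq_zpow_iff_modEq, u_order] at hab
      have ha : a.val < 6 := ZMod.val_lt a
      have hb : b.val < 6 := ZMod.val_lt b
      have hab' : (a.val : ℤ) % 6 = (b.val : ℤ) % 6 := hab
      have hv : a.val = b.val := by omega
      exact ZMod.val_injective _ hv
    rcases zmod2_cases j with rfl | rfl <;> rcases zmod2_cases l with rfl | rfl
    · simp only [ZMod.val_zero, pow_zero, mul_one] at h'
      exact Prod.ext (key _ _ h') rfl
    · exfalso
      simp only [ZMod.val_zero, ZMod.val_one, pow_zero, pow_one, mul_one] at h'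
      have hh : u ^ ((i.val : ℤ) - (k.val : ℤ)) = tEquiv := by
        rw [sub_eq_add_neg, add_comm, zpow_add, zpow_neg, h', inv_mul_cancel_left]
      exact t_ne_zpow _ hh
    · exfalso
      simp only [ZMod.val_zero, ZMod.val_one, pow_zero, pow_one, mul_one] at h'
      have hh : u ^ ((k.val : ℤ) - (i.val : ℤ)) = tEquiv := by
        rw [sub_eq_add_neg, add_comm, zpow_add, zpow_neg, h'.symm, inv_mul_cancel_left]
      exact t_ne_zpow _ hh
    · simp only [ZMod.val_one, pow_one] at h'
      have := mul_right_cancel h'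
      exact Prod.ext (key _ _ this) rfl
  · rintro ⟨x, n, hn | hn⟩
    · refine ⟨((n : ZMod 6), 0), ?_⟩
      apply Subtype.ext
      show u ^ (((n : ZMod 6)).val : ℤ) * tEquiv ^ (0 : ZMod 2).val = x
      rw [hn, ZMod.val_zero, pow_zero, mul_one]
      rw [zpow_eq_zpow_iff_modEq, u_order]
      rw [ZMod.val_intCast n]
      exact Int.emod_emod_of_dvd n dvd_rfl
    · refine ⟨((n : ZMod 6), 1), ?_⟩
      apply Subtype.ext
      show u ^ (((n : ZMod 6)).val : ℤ) * tEquiv ^ (1 : ZMod 2).val = x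
      rw [hn, ZMod.val_one, pow_one]
      congr 1
      rw [zpow_eq_zpow_iff_modEq, u_order]
      rw [ZMod.val_intCast n]
      exact Int.emod_emod_of_dvd n dvd_rfl

lemma card_K : Nat.card K = 12 := by
  rw [← Nat.card_eq_of_bijective f f_bij]
  simp [Nat.card_eq_fintype_card]

end Stmt7Aux

/-- `s` is an involution; together with `t` it generates a dihedral
group of order 12 (two involutions whose product has order 6), and both `s` and `t`
preserve the quadratic form `a² + 3b²`. -/
theorem stmt_7 :
    Function.Involutive sEquiv ∧ Function.Involutive tEquiv ∧
    orderOf (sEquiv * tEquiv) = 6 ∧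
    Nat.card (Subgroup.closure ({sEquiv, tEquiv} : Set ((ℂ × ℂ) ≃ₗ[ℂ] (ℂ × ℂ)))) = 12 ∧
    (∀ a b : ℂ, (sEquiv (a, b)).1 ^ 2 + 3 * (sEquiv (a, b)).2 ^ 2 = a ^ 2 + 3 * b ^ 2) ∧
    (∀ a b : ℂ, (tEquiv (a, b)).1 ^ 2 + 3 * (tEquiv (a, b)).2 ^ 2 = a ^ 2 + 3 * b ^ 2) := by
  refine ⟨Stmt7Aux.s_invol, Stmt7Aux.t_invol, Stmt7Aux.u_order, ?_, ?_, ?_⟩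
  · rw [Stmt7Aux.closure_eq]
    exact Stmt7Aux.card_K
  · intro a b
    rw [Stmt7Aux.sEquiv_apply]
    field_simp
    ring
  · intro a b
    rw [Stmt7Aux.tEquiv_apply]
    ring
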